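/- Let (λ_i)_{i≥1} and (μ_i)_{i≥1} be absolutely summable sequences of real numbers (∑|λ_i| < ∞, ∑|μ_i| < ∞) such that ∑_i λ_iⁿ = ∑_i μ_iⁿ for every integer n ≥ 1. Then the multisets of nonzero terms of (λ_i) and (μ_i) coincide. -/

import Mathlib

open Filter Topology

private lemma finite_ge_aux (f : ℕ → ℝ) (hf : Summable fun i => |f i|) {r : ℝ} (hr : 0 < r) :
    {i : ℕ | r ≤ |f i|}.Finite := by
  have h0 : Tendsto (fun i => |f i|) atTop (𝓝 0) := hf.tendsto_atTop_zero
  have hev : ∀ᶠ i in atTop, |f i| < r := h0.eventually_lt_const hr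
  obtain ⟨N, hN⟩ := eventually_atTop.1 hev
  apply (Set.finite_Iio N).subset
  intro i hi
  simp only [Set.mem_setOf_eq] at hi
  by_contra hiN
  exact absurd hi (not_le.2 (hN i (by simpa using hiN)))

private lemma summable_pow_aux (f : ℕ → ℝ) (hf : Summable fun i => |f i|) {n : ℕ}
    (hn : 1 ≤ n) : Summable fun i => f i ^ n := by
  set C := ∑' i, |f i| with hCdef
  have hC : ∀ i, |f i| ≤ C := fun i => Summable.le_tsum hf i fun j _ => abs_nonneg _
  apply Summable.of_norm_bounded (g := fun i => C ^ (n - 1) * |f i|) (hf.mul_left _)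
  intro i
  rw [Real.norm_eq_abs, abs_pow]
  calc |f i| ^ n = |f i| ^ (n - 1) * |f i| ^ 1 := by rw [← pow_add]; congr 1; omega
    _ ≤ C ^ (n - 1) * |f i| := by
        rw [pow_one]
        exact mul_le_mul_of_nonneg_right (pow_le_pow_left₀ (abs_nonneg _) (hC i) _)
          (abs_nonneg _)

private lemma card_fiber_aux (f : ℕ → ℝ) (c : ℝ) (s : Finset ℕ)
    (hs : ∀ i, f i = c → i ∈ s) [DecidablePred fun i => f i = c] :
    (s.filter fun i => f i = c).card = Nat.card {i : ℕ | f i = c} := by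
  have hset : {i : ℕ | f i = c} = ↑(s.filter fun i => f i = c) := by
    ext i
    simp only [Set.mem_setOf_eq, Finset.coe_filter, Set.mem_setOf_eq]
    exact ⟨fun h => ⟨hs i h, h⟩, fun h => h.2⟩
  rw [hset, Nat.card_coe_set_eq, Set.ncard_coe_finset]

private lemma tail_tendsto_aux (f : ℕ → ℝ) (hf : Summable fun i => |f i|) {r : ℝ}
    (hr : 0 < r) (s : Set ℕ) (hs : ∀ i ∈ s, |f i| < r) :
    Tendsto (fun n => (∑' i : s, f i ^ n) / r ^ n) atTop (𝓝 0) := by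
  have key : Tendsto (fun n => ∑' i : s, (f i / r) ^ n) atTop (𝓝 (∑' _ : s, (0 : ℝ))) := by
    apply tendsto_tsum_of_dominated_convergence (bound := fun i : s => |f i| / r)
    · exact ((hf.subtype s).div_const r)
    · intro k
      apply tendsto_pow_atTop_nhds_zero_of_abs_lt_one
      rw [abs_div, abs_of_pos hr]
      exact (div_lt_one hr).2 (hs k k.2)
    · filter_upwards [eventually_ge_atTop 1] with n hn k
      rw [Real.norm_eq_abs, abs_pow]
      have h1 : |f (k : ℕ) / r| ≤ 1 := by
        rw [abs_div, abs_of_pos hr]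
        exact le_of_lt ((div_lt_one hr).2 (hs k k.2))
      calc |f (k : ℕ) / r| ^ n ≤ |f (k : ℕ) / r| :=
            pow_le_of_le_one (abs_nonneg _) h1 (by omega)
        _ = |f (k : ℕ)| / r := by rw [abs_div, abs_of_pos hr]
  rw [tsum_zero] at key
  apply key.congr
  intro n
  rw [← tsum_div_const]
  exact tsum_congr fun i => div_pow _ _ _

private lemma decomp_aux (f : ℕ → ℝ) (hf : Summable fun i => |f i|) {r : ℝ} (hr : 0 < r) :
    ∃ (G : Finset ℕ) (t : ℕ → ℝ),
      (∀ i ∈ G, r < |f i|) ∧ (∀ i, r < |f i| → i ∈ G) ∧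
      Tendsto (fun n => t n / r ^ n) atTop (𝓝 0) ∧
      ∀ n : ℕ, 1 ≤ n → ∑' i, f i ^ n =
        (∑ i ∈ G, f i ^ n) + (Nat.card {i : ℕ | f i = r} : ℝ) * r ^ n
          + (Nat.card {i : ℕ | f i = -r} : ℝ) * (-r) ^ n + t n := by
  classical
  set F : Finset ℕ := (finite_ge_aux f hf hr).toFinset with hFdef
  have hFmem : ∀ i, i ∈ F ↔ r ≤ |f i| := by
    intro i; rw [hFdef, Set.Finite.mem_toFinset]; rfl
  refine ⟨F.filter fun i => r < |f i|, fun n => ∑' i : {x : ℕ | x ∉ F}, f i ^ n,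
    ?_, ?_, ?_, ?_⟩
  · intro i hi; exact (Finset.mem_filter.1 hi).2
  · intro i hi
    exact Finset.mem_filter.2 ⟨(hFmem i).2 hi.le, hi⟩
  · exact tail_tendsto_aux f hf hr _ fun i hi => not_le.1 fun hc => hi ((hFmem i).2 hc)
  · intro n hn
    have hsum : Summable fun i => f i ^ n := summable_pow_aux f hf hn
    have hsplit := Summable.sum_add_tsum_subtype_compl hsum F
    -- sum over F splits into > r part and = r part
    have hEsum : ∑ i ∈ F.filter (fun i => ¬ r < |f i|), f i ^ n =
        (Nat.card {i : ℕ | f i = r} : ℝ) * r ^ n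
          + (Nat.card {i : ℕ | f i = -r} : ℝ) * (-r) ^ n := by
      set E := F.filter fun i => ¬ r < |f i| with hEdef
      have hEabs : ∀ i ∈ E, |f i| = r := by
        intro i hi
        rw [hEdef, Finset.mem_filter] at hi
        exact le_antisymm (not_lt.1 hi.2) ((hFmem i).1 hi.1)
      have h1 : E.filter (fun i => f i = r) = E.filter fun i => f i = r := rfl
      rw [← Finset.sum_filter_add_sum_filter_not E (fun i => f i = r)]
      congr 1
      · rw [Finset.sum_congr rfl (fun i hi => by
            rw [(Finset.mem_filter.1 hi).2]), Finset.sum_const, nsmul_eq_mul]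
        congr 1
        have := card_fiber_aux f r E (fun i hif => by
          refine Finset.mem_filter.2 ⟨(hFmem i).2 ?_, ?_⟩
          · rw [hif, abs_of_pos hr]
          · rw [hif, abs_of_pos hr]; exact lt_irrefl r)
        rw [this]
      · have heq : E.filter (fun i => ¬ f i = r) = E.filter fun i => f i = -r := by
          apply Finset.filter_congr
          intro i hi
          have habs := hEabs i hi
          rcases abs_eq hr.le |>.1 habs with h | h
          · have hner : r ≠ -r := by intro hc; linarith
            simp [h, hner]
          · simp only [h, iff_true]
            intro hcon
            rw [hcon] at h
            nlinarith
        rw [heq, Finset.sum_congr rfl (fun i hi => by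
            rw [(Finset.mem_filter.1 hi).2]), Finset.sum_const, nsmul_eq_mul]
        congr 1
        have := card_fiber_aux f (-r) E (fun i hif => by
          refine Finset.mem_filter.2 ⟨(hFmem i).2 ?_, ?_⟩
          · rw [hif, abs_neg, abs_of_pos hr]
          · rw [hif, abs_neg, abs_of_pos hr]; exact lt_irrefl r)
        rw [this]
    calc ∑' i, f i ^ n = (∑ i ∈ F, f i ^ n) + ∑' i : {x : ℕ | x ∉ F}, f i ^ n := by
          rw [← hsplit]; rfl
      _ = ((∑ i ∈ F.filter (fun i => r < |f i|), f i ^ n)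
            + ∑ i ∈ F.filter (fun i => ¬ r < |f i|), f i ^ n)
            + ∑' i : {x : ℕ | x ∉ F}, f i ^ n := by
          rw [Finset.sum_filter_add_sum_filter_not]
      _ = _ := by rw [hEsum]; ring

theorem stmt_16 (l μ : ℕ → ℝ)
    (hl : Summable fun i => |l i|) (hμ : Summable fun i => |μ i|)
    (h : ∀ n : ℕ, 1 ≤ n → ∑' i, l i ^ n = ∑' i, μ i ^ n) :
    ∀ c : ℝ, c ≠ 0 → Nat.card {i | l i = c} = Nat.card {i | μ i = c} := by
  by_contra hcon
  push_neg at hcon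
  obtain ⟨c₁, hc₁0, hc₁⟩ := hcon
  classical
  have hε : (0 : ℝ) < |c₁| := abs_pos.2 hc₁0
  set T : Set ℝ :=
    {c : ℝ | Nat.card {i | l i = c} ≠ Nat.card {i | μ i = c} ∧ |c₁| ≤ |c|} with hTdef
  have hTfin : T.Finite := by
    apply Set.Finite.subset (((finite_ge_aux l hl hε).image l).union
      ((finite_ge_aux μ hμ hε).image μ))
    rintro c ⟨hne, hge⟩
    by_cases hcl : ∃ i, l i = c
    · obtain ⟨i, hi⟩ := hcl
      exact Or.inl ⟨i, by rw [Set.mem_setOf_eq, hi]; exact hge, hi⟩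
    · have h1 : {i | l i = c} = (∅ : Set ℕ) := by
        ext i; simp only [Set.mem_setOf_eq, Set.mem_empty_iff_false, iff_false]
        exact fun hc => hcl ⟨i, hc⟩
      rw [h1] at hne
      simp only [Nat.card_eq_fintype_card, Set.empty_def] at hne
      have hne0 : Nat.card {i | μ i = c} ≠ 0 := by
        intro hz; apply hne; rw [hz]; simp
      have h2 : {i | μ i = c}.Nonempty := by
        rcases Set.eq_empty_or_nonempty {i | μ i = c} with he | hne2
        · exfalso; apply hne0; rw [he]; simp
        · exact hne2
      obtain ⟨i, hi⟩ := h2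
      exact Or.inr ⟨i, by rw [Set.mem_setOf_eq, hi]; exact hge, hi⟩
  have hc₁T : c₁ ∈ T := ⟨hc₁, le_refl _⟩
  obtain ⟨c₀, hc₀T, hmax⟩ := Set.exists_max_image T (fun c => |c|) hTfin ⟨c₁, hc₁T⟩
  obtain ⟨hc₀ne, hc₀ge⟩ := hc₀T
  set r : ℝ := |c₀| with hrdef
  have hr : 0 < r := lt_of_lt_of_le hε hc₀ge
  have habove : ∀ c : ℝ, r < |c| →
      Nat.card {i | l i = c} = Nat.card {i | μ i = c} := by
    intro c hc
    by_contra hne'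
    have hcT : c ∈ T := ⟨hne', le_of_lt (lt_of_le_of_lt hc₀ge hc)⟩
    exact absurd (hmax c hcT) (not_le.2 hc)
  obtain ⟨Gl, tl, hGl1, hGl2, htl, hfl⟩ := decomp_aux l hl hr
  obtain ⟨Gμ, tμ, hGμ1, hGμ2, htμ, hfμ⟩ := decomp_aux μ hμ hr
  -- the sums over the strictly-above-r parts agree
  have hGsum : ∀ n : ℕ, (∑ i ∈ Gl, l i ^ n) = ∑ i ∈ Gμ, μ i ^ n := by
    intro n
    set V : Finset ℝ := Gl.image l ∪ Gμ.image μ with hVdef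
    have h1 : ∑ i ∈ Gl, l i ^ n
        = ∑ c ∈ V, (Gl.filter fun i => l i = c).card • c ^ n := by
      rw [← Finset.sum_fiberwise_of_maps_to' (t := V)
        (fun i hi => Finset.mem_union_left _ (Finset.mem_image_of_mem l hi))
        (fun c => c ^ n)]
      exact Finset.sum_congr rfl fun c _ => by rw [Finset.sum_const]
    have h2 : ∑ i ∈ Gμ, μ i ^ n
        = ∑ c ∈ V, (Gμ.filter fun i => μ i = c).card • c ^ n := by
      rw [← Finset.sum_fiberwise_of_maps_to' (t := V)
        (fun i hi => Finset.mem_union_right _ (Finset.mem_image_of_mem μ hi))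
        (fun c => c ^ n)]
      exact Finset.sum_congr rfl fun c _ => by rw [Finset.sum_const]
    rw [h1, h2]
    refine Finset.sum_congr rfl fun c hc => ?_
    have hcr : r < |c| := by
      rcases Finset.mem_union.1 hc with hm | hm <;>
        obtain ⟨i, hi, rfl⟩ := Finset.mem_image.1 hm
      · exact hGl1 i hi
      · exact hGμ1 i hi
    congr 1
    rw [card_fiber_aux l c Gl (fun i hi => hGl2 i (by rw [hi]; exact hcr)),
      card_fiber_aux μ c Gμ (fun i hi => hGμ2 i (by rw [hi]; exact hcr))]
    exact habove c hcr
  set A : ℝ := (Nat.card {i : ℕ | l i = r} : ℝ) - (Nat.card {i : ℕ | μ i = r} : ℝ)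
    with hAdef
  set B : ℝ := (Nat.card {i : ℕ | l i = -r} : ℝ) - (Nat.card {i : ℕ | μ i = -r} : ℝ)
    with hBdef
  have hrn : ∀ n : ℕ, (r : ℝ) ^ n ≠ 0 := fun n => pow_ne_zero _ hr.ne'
  have key : ∀ n : ℕ, 1 ≤ n →
      A + B * (-1 : ℝ) ^ n + (tl n - tμ n) / r ^ n = 0 := by
    intro n hn
    have h0 := h n hn
    rw [hfl n hn, hfμ n hn, hGsum n] at h0
    rw [neg_pow, neg_pow] at h0
    have h1 : A * r ^ n + B * ((-1 : ℝ) ^ n * r ^ n) + (tl n - tμ n) = 0 := by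
      rw [hAdef, hBdef]; linear_combination h0
    have h2 : (tl n - tμ n) / r ^ n = -(A + B * (-1 : ℝ) ^ n) := by
      rw [div_eq_iff (hrn n)]; linear_combination h1
    rw [h2]; ring
  have hd : Tendsto (fun n => (tl n - tμ n) / r ^ n) atTop (𝓝 0) := by
    have := htl.sub htμ
    rw [sub_zero] at this
    exact this.congr fun n => (sub_div _ _ _).symm
  have h2k : Tendsto (fun k : ℕ => 2 * k) atTop atTop :=
    tendsto_atTop_mono (fun k => by simp only [id_eq]; omega) tendsto_id
  have h2k1 : Tendsto (fun k : ℕ => 2 * k + 1) atTop atTop :=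
    tendsto_atTop_mono (fun k => by simp only [id_eq]; omega) tendsto_id
  have hAB1 : A + B = 0 := by
    have hten : Tendsto (fun k : ℕ => A + B + (tl (2 * k) - tμ (2 * k)) / r ^ (2 * k))
        atTop (𝓝 (A + B + 0)) := tendsto_const_nhds.add (hd.comp h2k)
    have hev : (fun k : ℕ => A + B + (tl (2 * k) - tμ (2 * k)) / r ^ (2 * k))
        =ᶠ[atTop] fun _ => (0 : ℝ) := by
      filter_upwards [eventually_ge_atTop 1] with k hk
      have hkey := key (2 * k) (by omega)
      have hpow : ((-1 : ℝ)) ^ (2 * k) = 1 := by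
        rw [pow_mul]; norm_num
      rw [hpow] at hkey
      linarith
    have := tendsto_nhds_unique (hten.congr' hev) tendsto_const_nhds
    linarith
  have hAB2 : A - B = 0 := by
    have hten : Tendsto
        (fun k : ℕ => A - B + (tl (2 * k + 1) - tμ (2 * k + 1)) / r ^ (2 * k + 1))
        atTop (𝓝 (A - B + 0)) := tendsto_const_nhds.add (hd.comp h2k1)
    have hev : (fun k : ℕ => A - B + (tl (2 * k + 1) - tμ (2 * k + 1)) / r ^ (2 * k + 1))
        =ᶠ[atTop] fun _ => (0 : ℝ) := by
      filter_upwards with k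
      have hkey := key (2 * k + 1) (by omega)
      have hpow : ((-1 : ℝ)) ^ (2 * k + 1) = -1 := by
        rw [pow_succ, pow_mul]; norm_num
      rw [hpow] at hkey
      linarith
    have := tendsto_nhds_unique (hten.congr' hev) tendsto_const_nhds
    linarith
  have hA : A = 0 := by linarith
  have hB : B = 0 := by linarith
  have heqr : Nat.card {i : ℕ | l i = r} = Nat.card {i : ℕ | μ i = r} := by
    have : (Nat.card {i : ℕ | l i = r} : ℝ) = (Nat.card {i : ℕ | μ i = r} : ℝ) := by
      rw [hAdef] at hA; linarith
    exact_mod_cast this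
  have heqnr : Nat.card {i : ℕ | l i = -r} = Nat.card {i : ℕ | μ i = -r} := by
    have : (Nat.card {i : ℕ | l i = -r} : ℝ) = (Nat.card {i : ℕ | μ i = -r} : ℝ) := by
      rw [hBdef] at hB; linarith
    exact_mod_cast this
  rcases le_or_gt 0 c₀ with hc₀pos | hc₀neg
  · have : c₀ = r := by rw [hrdef, abs_of_nonneg hc₀pos]
    rw [this] at hc₀ne
    exact hc₀ne heqr
  · have : c₀ = -r := by rw [hrdef, abs_of_neg hc₀neg]; ring
    rw [this] at hc₀ne
    exact hc₀ne heqnr
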